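/- The Lovász theta number of the Möbius ladder graph $Ci_{4N}(1, 2N)$ (the circulant graph on $4N$ vertices with connection set $\{1, 2N\}$) equals $N(1 + \cos(\pi/(2N)))$ for every integer $N \geq 2$. -/

import Mathlib

open Real Finset

lemma sum_cos_int (n : ℕ) (hn : 0 < n) (m : ℤ) :
    ∑ k ∈ Finset.range n, Real.cos (2*Real.pi*m*k/n) = if (n:ℤ) ∣ m then (n:ℝ) else 0 := by
  have hnn : (n:ℝ) ≠ 0 := by positivity
  have hnnC : (n:ℂ) ≠ 0 := by exact_mod_cast Nat.cast_ne_zero.mpr hn.ne'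
  have hre : ∀ k : ℕ, Real.cos (2*Real.pi*m*k/n)
      = ((Complex.exp ((2*Real.pi*m/n : ℝ) * Complex.I))^k).re := by
    intro k
    rw [← Complex.exp_nat_mul]
    have : (k : ℂ) * ((2*Real.pi*m/n : ℝ) * Complex.I) = ((2*Real.pi*m*k/n : ℝ)) * Complex.I := by
      push_cast; ring
    rw [this, Complex.exp_ofReal_mul_I_re]
  simp only [hre, ← Complex.re_sum]
  by_cases hd : (n:ℤ) ∣ m
  · obtain ⟨t, rfl⟩ := hd
    have : ((2*Real.pi*(n*t : ℤ)/n : ℝ) : ℂ) * Complex.I = (t : ℤ) * (2 * Real.pi * Complex.I) := by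
      push_cast
      field_simp
    rw [this, Complex.exp_int_mul_two_pi_mul_I]
    simp [if_pos (Dvd.intro t rfl)]
  · rw [if_neg hd]
    set z : ℂ := Complex.exp ((2*Real.pi*m/n : ℝ) * Complex.I) with hz
    have hz1 : z ≠ 1 := by
      rw [hz, Ne, Complex.exp_eq_one_iff]
      rintro ⟨t, ht⟩
      have him := congrArg Complex.im ht
      simp at him
      -- him : 2*π*m/n = t * (2*π)  (roughly)
      have h2 : (m : ℝ) = t * n := by
        have hpi := Real.pi_pos
        field_simp at him
        nlinarith [him]
      have : m = t * n := by exact_mod_cast h2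
      exact hd ⟨t, by linarith⟩
    have hzn : z ^ n = 1 := by
      rw [hz, ← Complex.exp_nat_mul]
      have : (n:ℂ) * (((2*Real.pi*m/n : ℝ)) * Complex.I) = (m : ℤ) * (2*Real.pi*Complex.I) := by
        push_cast
        field_simp
      rw [this]
      simpa using Complex.exp_int_mul_two_pi_mul_I m
    rw [geom_sum_eq hz1, hzn]
    simp

lemma cos_nat_mul_pi' (k : ℕ) : Real.cos (k*Real.pi) = (-1:ℝ)^k := by
  induction k with
  | zero => simp
  | succ m ih => push_cast; rw [add_mul, one_mul, Real.cos_add]; simp [ih]; ring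

lemma sum_cos_4N (N : ℕ) (hN : 0 < N) (m : ℤ) :
    ∑ k ∈ Finset.range (4*N), Real.cos (k*m*(Real.pi/(2*N)))
      = if (4*(N:ℤ)) ∣ m then ((4*N : ℕ):ℝ) else 0 := by
  have h := sum_cos_int (4*N) (by positivity) m
  have hNn : (N:ℝ) ≠ 0 := by positivity
  push_cast at h ⊢
  rw [← h]
  apply Finset.sum_congr rfl
  intro k _
  congr 1
  push_cast
  field_simp
  ring

lemma conv_sum (N : ℕ) (hN : 0 < N) (α β : ℝ) (m : ℤ) :
    ∑ k ∈ Finset.range (4*N),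
      (1 + 2*α*Real.cos (k*(Real.pi/(2*N))) + β*(-1:ℝ)^k) * Real.cos (k*m*(Real.pi/(2*N)))
    = (if (4*N:ℤ) ∣ m then ((4*N:ℕ):ℝ) else 0)
      + α*((if (4*N:ℤ) ∣ (m+1) then ((4*N:ℕ):ℝ) else 0) + (if (4*N:ℤ) ∣ (m-1) then ((4*N:ℕ):ℝ) else 0))
      + (β/2)*((if (4*N:ℤ) ∣ (m+2*N) then ((4*N:ℕ):ℝ) else 0) + (if (4*N:ℤ) ∣ (m-2*N) then ((4*N:ℕ):ℝ) else 0)) := by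
  have hNn : (N:ℝ) ≠ 0 := by positivity
  set φ := Real.pi/(2*N) with hφ
  have key : ∀ k ∈ Finset.range (4*N),
      (1 + 2*α*Real.cos (k*φ) + β*(-1:ℝ)^k) * Real.cos (k*m*φ)
      = Real.cos (k*m*φ)
        + α*(Real.cos (k*((m+1 : ℤ))*φ) + Real.cos (k*((m-1 : ℤ))*φ))
        + (β/2)*(Real.cos (k*((m+2*N : ℤ))*φ) + Real.cos (k*((m-2*N : ℤ))*φ)) := by
    intro k _
    have e1 : (k:ℝ)*((m+1 : ℤ))*φ = k*m*φ + k*φ := by push_cast; ring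
    have e2 : (k:ℝ)*((m-1 : ℤ))*φ = k*m*φ - k*φ := by push_cast; ring
    have e3 : (k:ℝ)*((m+2*N : ℤ))*φ = k*m*φ + k*Real.pi := by
      push_cast; rw [hφ]; field_simp
    have e4 : (k:ℝ)*((m-2*N : ℤ))*φ = k*m*φ - k*Real.pi := by
      push_cast; rw [hφ]; field_simp
    rw [e1, e2, e3, e4, Real.cos_add, Real.cos_sub, Real.cos_add, Real.cos_sub,
      cos_nat_mul_pi' k]
    ring
  rw [Finset.sum_congr rfl key]
  simp only [Finset.sum_add_distrib, ← Finset.mul_sum, hφ, sum_cos_4N N hN]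

lemma cos_bound (N k : ℕ) (hN : 1 ≤ N) (hk1 : 1 ≤ k) (hk : k < 4*N) (hk2 : k ≠ 2*N) :
    Real.cos (Real.pi - Real.pi/(2*N)) ≤ Real.cos (k * (Real.pi/(2*N))) := by
  have hNpos : (0:ℝ) < N := by exact_mod_cast hN
  have hπ := Real.pi_pos
  have hφpos : 0 < Real.pi/(2*N) := by positivity
  rcases lt_or_gt_of_ne hk2 with h | h
  · -- k ≤ 2N - 1 : k*φ ≤ π - φ
    apply Real.cos_le_cos_of_nonneg_of_le_pi
    · positivity
    · linarith
    · have hk' : (k:ℝ) ≤ 2*N - 1 := by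
        have : k + 1 ≤ 2*N := h
        have : (k:ℝ) + 1 ≤ 2*N := by exact_mod_cast this
        linarith
      have : (k:ℝ) * (Real.pi/(2*N)) ≤ (2*N-1) * (Real.pi/(2*N)) := by
        apply mul_le_mul_of_nonneg_right hk' (le_of_lt hφpos)
      calc (k:ℝ) * (Real.pi/(2*N)) ≤ (2*N-1) * (Real.pi/(2*N)) := this
        _ = Real.pi - Real.pi/(2*N) := by field_simp
  · -- k ≥ 2N+1 : use cos(2π - x) = cos x
    have e : (k:ℝ) * (Real.pi/(2*N)) = 2*Real.pi - (4*N - k) * (Real.pi/(2*N)) := by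
      field_simp; ring
    rw [e, Real.cos_two_pi_sub]
    apply Real.cos_le_cos_of_nonneg_of_le_pi
    · have hk4 : (k:ℝ) < 4*N := by exact_mod_cast hk
      have : (0:ℝ) < (4*N - k) := by linarith
      positivity
    · linarith
    · have hk' : (4*N:ℝ) - k ≤ 2*N - 1 := by
        have : 2*N + 1 ≤ k := h
        have : (2*N:ℝ) + 1 ≤ k := by exact_mod_cast this
        linarith
      have : ((4*N:ℝ) - k) * (Real.pi/(2*N)) ≤ (2*N-1) * (Real.pi/(2*N)) :=
        mul_le_mul_of_nonneg_right hk' (le_of_lt hφpos)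
      calc ((4*N:ℝ) - k) * (Real.pi/(2*N)) ≤ (2*N-1) * (Real.pi/(2*N)) := this
        _ = Real.pi - Real.pi/(2*N) := by field_simp

noncomputable section LTML
namespace LTML
open Real Matrix

variable (N : ℕ)

def phi : ℝ := Real.pi / (2*N)
def cc : ℝ := Real.cos (phi N)
def th : ℝ := N * (1 + cc N)

def w0 : Fin 1 ⊕ Fin (4*N) → ℝ := Sum.elim (fun _ => 1) (fun _ => (1 + cc N)/4)
def w1 : Fin 1 ⊕ Fin (4*N) → ℝ := Sum.elim 0 (fun i => (-1:ℝ)^(i:ℕ))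
def wc : Fin 1 ⊕ Fin (4*N) → ℝ := Sum.elim 0 (fun i => Real.cos ((Real.pi - phi N) * i))
def ws : Fin 1 ⊕ Fin (4*N) → ℝ := Sum.elim 0 (fun i => Real.sin ((Real.pi - phi N) * i))

def Xopt : Matrix (Fin 1 ⊕ Fin (4*N)) (Fin 1 ⊕ Fin (4*N)) ℝ :=
  fun p q => w0 N p * w0 N q + ((1 + cc N)*(1 - cc N)/16) * (w1 N p * w1 N q)
    + ((1 + cc N)/8) * (wc N p * wc N q + ws N p * ws N q)

lemma quad_expand {I : Type*} [Fintype I] (X : Matrix I I ℝ) (w : I → ℝ) :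
    w ⬝ᵥ X *ᵥ w = ∑ p, ∑ q, w p * X p q * w q := by
  simp [dotProduct, Matrix.mulVec, Finset.mul_sum, mul_assoc]

lemma cc_bounds : -1 ≤ cc N ∧ cc N ≤ 1 := ⟨Real.neg_one_le_cos _, Real.cos_le_one _⟩

lemma Xopt_psd : (Xopt N).PosSemidef := by
  have h1 : (0:ℝ) ≤ (1 + cc N)*(1 - cc N)/16 := by
    have := cc_bounds N; nlinarith [this.1, this.2]
  have h2 : (0:ℝ) ≤ (1 + cc N)/8 := by
    have := cc_bounds N; linarith [this.1]
  refine Matrix.PosSemidef.of_dotProduct_mulVec_nonneg ?_ ?_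
  · ext p q
    simp only [Matrix.conjTranspose_apply, star_trivial, Xopt]
    ring
  · intro x
    rw [star_trivial]
    have key : x ⬝ᵥ (Xopt N) *ᵥ x
        = (w0 N ⬝ᵥ x)^2 + ((1 + cc N)*(1 - cc N)/16) * (w1 N ⬝ᵥ x)^2
          + ((1 + cc N)/8) * ((wc N ⬝ᵥ x)^2 + (ws N ⬝ᵥ x)^2) := by
      rw [quad_expand]
      simp only [sq, dotProduct, Finset.sum_mul_sum, Finset.mul_sum, Finset.sum_mul,
        ← Finset.sum_add_distrib]
      apply Finset.sum_congr rfl; intro p _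
      apply Finset.sum_congr rfl; intro q _
      simp only [Xopt]; ring
    rw [key]
    positivity


lemma Xopt_entry (i j : Fin (4*N)) : Xopt N (Sum.inr i) (Sum.inr j) =
    (1 + cc N)^2/16 + (1 + cc N)*(1 - cc N)/16 * ((-1:ℝ)^(i:ℕ) * (-1:ℝ)^(j:ℕ))
      + (1 + cc N)/8 * Real.cos ((Real.pi - phi N)*(i:ℕ) - (Real.pi - phi N)*(j:ℕ)) := by
  simp only [Xopt, w0, w1, wc, ws, Sum.elim_inr, Real.cos_sub]
  ring

lemma Xopt_corner : Xopt N (Sum.inl 0) (Sum.inl 0) = 1 := by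
  simp [Xopt, w0, w1, wc, ws]

lemma Xopt_row (i : Fin (4*N)) : Xopt N (Sum.inl 0) (Sum.inr i) = (1 + cc N)/4 := by
  simp [Xopt, w0, w1, wc, ws]

lemma Xopt_diag (i : Fin (4*N)) : Xopt N (Sum.inr i) (Sum.inr i) = (1 + cc N)/4 := by
  rw [Xopt_entry]
  have h1 : ((-1:ℝ)^(i:ℕ)) * ((-1:ℝ)^(i:ℕ)) = 1 := by
    rw [← pow_add, ← two_mul, pow_mul]; norm_num
  have h2 : (Real.pi - phi N)*(i:ℕ) - (Real.pi - phi N)*(i:ℕ) = 0 := by ring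
  rw [h1, h2, Real.cos_zero]
  ring

lemma Xopt_edge1 (hN : 1 ≤ N) (i j : Fin (4*N)) (h : ((i:ℕ) + 1) % (4*N) = (j:ℕ)) :
    Xopt N (Sum.inr i) (Sum.inr j) = 0 := by
  have hNR : (N:ℝ) ≠ 0 := by positivity
  rw [Xopt_entry]
  rcases Nat.lt_or_ge ((i:ℕ) + 1) (4*N) with hlt | hge
  · have hj : (j:ℕ) = (i:ℕ) + 1 := by rw [← h, Nat.mod_eq_of_lt hlt]
    rw [hj]
    have e : (Real.pi - phi N)*(i:ℕ) - (Real.pi - phi N)*(((i:ℕ)+1 : ℕ):ℝ)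
        = -(Real.pi - phi N) := by push_cast; ring
    rw [e, Real.cos_neg, Real.cos_pi_sub]
    rw [pow_succ]
    have ht : ((-1:ℝ)^(i:ℕ))*((-1:ℝ)^(i:ℕ)) = 1 := by
      rw [← pow_add, ← two_mul, pow_mul]; norm_num
    simp only [cc]
    linear_combination (-((1+Real.cos (phi N))*(1-Real.cos (phi N))/16)) * ht
  · have hi : (i:ℕ) + 1 = 4*N := le_antisymm i.isLt hge
    have hj : (j:ℕ) = 0 := by rw [← h, hi, Nat.mod_self]
    have hiR : ((i:ℕ):ℝ) = 4*(N:ℝ) - 1 := by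
      have := congrArg (Nat.cast : ℕ → ℝ) hi; push_cast at this; linarith
    rw [hj, hiR]
    have hiodd : Odd (i:ℕ) := by
      refine ⟨2*N - 1, ?_⟩
      omega
    rw [hiodd.neg_one_pow]
    have e : (Real.pi - phi N)*(4*(N:ℝ) - 1) - (Real.pi - phi N)*((0:ℕ):ℝ)
        = (Real.pi + phi N) + ((2*(N:ℤ) - 2) : ℤ)*(2*Real.pi) := by
      push_cast
      simp only [phi]
      field_simp
      ring
    rw [e, Real.cos_add_int_mul_two_pi, Real.cos_add, Real.cos_pi, Real.sin_pi]
    simp only [cc, pow_zero]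
    ring

lemma Xopt_symm (p q) : Xopt N p q = Xopt N q p := by
  simp only [Xopt]; ring

lemma Xopt_edge3' (hN : 1 ≤ N) (i j : Fin (4*N)) (hb : (j:ℕ) = (i:ℕ) + 2*N) :
    Xopt N (Sum.inr i) (Sum.inr j) = 0 := by
  have hNR : (N:ℝ) ≠ 0 := by positivity
  rw [Xopt_entry, hb]
  have e : (Real.pi - phi N)*(i:ℕ) - (Real.pi - phi N)*(((i:ℕ) + 2*N : ℕ):ℝ)
      = Real.pi + ((-(N:ℤ)) : ℤ)*(2*Real.pi) := by
    push_cast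
    simp only [phi]
    field_simp
    ring
  rw [e, Real.cos_add_int_mul_two_pi, Real.cos_pi, pow_add]
  have h2 : ((-1:ℝ))^(2*N) = 1 := by rw [pow_mul]; norm_num
  rw [h2]
  have ht : ((-1:ℝ)^(i:ℕ))*((-1:ℝ)^(i:ℕ)) = 1 := by
    rw [← pow_add, ← two_mul, pow_mul]; norm_num
  simp only [cc]
  linear_combination ((1+Real.cos (phi N))*(1-Real.cos (phi N))/16) * ht

lemma Xopt_edge3 (hN : 1 ≤ N) (i j : Fin (4*N)) (h : ((i:ℕ) + 2*N) % (4*N) = (j:ℕ)) :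
    Xopt N (Sum.inr i) (Sum.inr j) = 0 := by
  rcases Nat.lt_or_ge ((i:ℕ) + 2*N) (4*N) with hlt | hge
  · exact Xopt_edge3' N hN i j (by rw [← h, Nat.mod_eq_of_lt hlt])
  · have hij : (i:ℕ) = (j:ℕ) + 2*N := by
      have hi4 : (i:ℕ) < 4*N := i.isLt
      have : ((i:ℕ) + 2*N) % (4*N) = (i:ℕ) + 2*N - 4*N := by
        rw [Nat.mod_eq_sub_mod hge, Nat.mod_eq_of_lt (by omega)]
      omega
    rw [Xopt_symm]
    exact Xopt_edge3' N hN j i hij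


lemma dvd_window (M a : ℤ) (hM : 0 < M) (h1 : -M < a) (h2 : a < 2*M) :
    M ∣ a ↔ a = 0 ∨ a = M := by
  constructor
  · rintro ⟨t, rfl⟩
    have l1 : 0 ≤ t := by nlinarith
    have l2 : t < 2 := by nlinarith
    interval_cases t
    · left; ring
    · right; ring
  · rintro (rfl | rfl)
    · exact dvd_zero _
    · exact dvd_refl _

lemma mod_succ_iff (n i j : ℕ) (hi : i < n) (hj : j < n) :
    (i+1) % n = j ↔ ((i+1 < n ∧ j = i+1) ∨ (i+1 = n ∧ j = 0)) := by
  rcases Nat.lt_or_ge (i+1) n with h | h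
  · rw [Nat.mod_eq_of_lt h]; omega
  · have e : i + 1 = n := by omega
    rw [e, Nat.mod_self]; omega

lemma mod_anti_iff (N i j : ℕ) (hi : i < 4*N) (hj : j < 4*N) :
    (i+2*N) % (4*N) = j ↔ (j = i + 2*N ∨ i = j + 2*N) := by
  rcases Nat.lt_or_ge (i+2*N) (4*N) with h | h
  · rw [Nat.mod_eq_of_lt h]; omega
  · have e : (i+2*N) % (4*N) = i + 2*N - 4*N := by
      rw [Nat.mod_eq_sub_mod h, Nat.mod_eq_of_lt (by omega)]
    rw [e]; omega

lemma dvd_iff_eq (N i j : ℕ) (hN : 1 ≤ N) (hi : i < 4*N) (hj : j < 4*N) :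
    (4*(N:ℤ)) ∣ ((i:ℤ) - j) ↔ i = j := by
  rw [dvd_window (4*N) _ (by positivity) (by omega) (by omega)]
  omega

lemma dvd_iff_succ (N i j : ℕ) (hN : 1 ≤ N) (hi : i < 4*N) (hj : j < 4*N) :
    (4*(N:ℤ)) ∣ ((i:ℤ) - j + 1) ↔ (i+1) % (4*N) = j := by
  rw [dvd_window (4*N) _ (by positivity) (by omega) (by omega), mod_succ_iff (4*N) i j hi hj]
  omega

lemma dvd_iff_pred (N i j : ℕ) (hN : 1 ≤ N) (hi : i < 4*N) (hj : j < 4*N) :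
    (4*(N:ℤ)) ∣ ((i:ℤ) - j - 1) ↔ (j+1) % (4*N) = i := by
  rw [show (i:ℤ) - j - 1 = -((j:ℤ) - i + 1) by ring, dvd_neg]
  exact dvd_iff_succ N j i hN hj hi

lemma dvd_iff_anti (N i j : ℕ) (hN : 1 ≤ N) (hi : i < 4*N) (hj : j < 4*N) :
    (4*(N:ℤ)) ∣ ((i:ℤ) - j + 2*N) ↔ (i+2*N) % (4*N) = j := by
  rw [dvd_window (4*N) _ (by positivity) (by omega) (by omega), mod_anti_iff N i j hi hj]
  omega

lemma dvd_iff_anti' (N i j : ℕ) (hN : 1 ≤ N) (hi : i < 4*N) (hj : j < 4*N) :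
    (4*(N:ℤ)) ∣ ((i:ℤ) - j - 2*N) ↔ (i+2*N) % (4*N) = j := by
  rw [show (i:ℤ) - j - 2*N = -((j:ℤ) - i + 2*N) by ring, dvd_neg,
    dvd_iff_anti N j i hN hj hi, mod_anti_iff N j i hj hi, mod_anti_iff N i j hi hj]
  omega


lemma sum_split {n' : ℕ} (Y : Matrix (Fin 1 ⊕ Fin n') (Fin 1 ⊕ Fin n') ℝ)
    (g : Fin 1 ⊕ Fin n' → ℝ) :
    ∑ p, ∑ q, g p * Y p q * g q
      = g (Sum.inl 0) * Y (Sum.inl 0) (Sum.inl 0) * g (Sum.inl 0)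
        + (∑ j, g (Sum.inl 0) * Y (Sum.inl 0) (Sum.inr j) * g (Sum.inr j))
        + (∑ i, g (Sum.inr i) * Y (Sum.inr i) (Sum.inl 0) * g (Sum.inl 0))
        + ∑ i, ∑ j, g (Sum.inr i) * Y (Sum.inr i) (Sum.inr j) * g (Sum.inr j) := by
  simp only [Fintype.sum_sum_type, Fin.sum_univ_one]
  rw [Finset.sum_add_distrib]
  ring

lemma sum_block {n' : ℕ} (Y : Matrix (Fin 1 ⊕ Fin n') (Fin 1 ⊕ Fin n') ℝ) (f : Fin n' → ℝ) :
    ∑ p, ∑ q, (Sum.elim (0 : Fin 1 → ℝ) f) p * Y p q * (Sum.elim (0 : Fin 1 → ℝ) f) q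
      = ∑ i, ∑ j, f i * Y (Sum.inr i) (Sum.inr j) * f j := by
  simp [Fintype.sum_sum_type, Fin.sum_univ_one]

lemma upper (N : ℕ) (hN : 2 ≤ N)
    (X : Matrix (Fin 1 ⊕ Fin (4 * N)) (Fin 1 ⊕ Fin (4 * N)) ℝ)
    (hpsd : X.PosSemidef)
    (h00 : X (Sum.inl 0) (Sum.inl 0) = 1)
    (hdiag : ∀ i, X (Sum.inr i) (Sum.inr i) = X (Sum.inl 0) (Sum.inr i))
    (hedge : ∀ i j : Fin (4*N), ((i.val + 1) % (4 * N) = j.val ∨ (j.val + 1) % (4 * N) = i.val ∨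
        (i.val + 2 * N) % (4 * N) = j.val) → X (Sum.inr i) (Sum.inr j) = 0) :
    ∑ i, X (Sum.inr i) (Sum.inr i) ≤ (N : ℝ) * (1 + Real.cos (Real.pi / (2 * N))) := by
  have hN0 : 0 < N := by omega
  have hNR : (0:ℝ) < N := by exact_mod_cast hN0
  set φ : ℝ := Real.pi / (2 * N) with hφdef
  have hπ := Real.pi_pos
  have hφ0 : 0 < φ := by positivity
  have hN2R : (2:ℝ) ≤ N := by exact_mod_cast hN
  have hφlt : φ < Real.pi / 2 := by
    rw [hφdef, div_lt_div_iff₀ (by positivity) (by positivity)]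
    nlinarith
  set c : ℝ := Real.cos φ with hcdef
  have hc0 : 0 < c := Real.cos_pos_of_mem_Ioo ⟨by linarith, hφlt⟩
  have hc1 : c ≤ 1 := Real.cos_le_one φ
  have hc1' : (0:ℝ) < 1 + c := by linarith
  set θ : ℝ := N * (1 + c) with hθdef
  have hθ0 : 0 < θ := by positivity
  set α : ℝ := 1 / (1 + c) with hαdef
  set β : ℝ := (1 - c) / (1 + c) with hβdef
  have hα0 : 0 < α := by positivity
  -- vectors
  set v : Fin 1 ⊕ Fin (4*N) → ℝ := Sum.elim (fun _ => θ) (fun _ => -1) with hvdef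
  set cv : ℕ → Fin 1 ⊕ Fin (4*N) → ℝ :=
    fun k => Sum.elim 0 (fun i => Real.cos (k * (i:ℕ) * φ)) with hcvdef
  set sv : ℕ → Fin 1 ⊕ Fin (4*N) → ℝ :=
    fun k => Sum.elim 0 (fun i => Real.sin (k * (i:ℕ) * φ)) with hsvdef
  set μ : ℕ → ℝ := fun k =>
    (1 + 2*α*Real.cos (k*φ) + β*(-1:ℝ)^k) - (if k = 0 then (4*N:ℝ)/θ else 0) with hμdef
  set D : ℝ := ∑ i, X (Sum.inr i) (Sum.inr i) with hDdef
  set T : ℝ := ∑ i, ∑ j, X (Sum.inr i) (Sum.inr j) with hTdef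
  have hQ : ∀ w : Fin 1 ⊕ Fin (4*N) → ℝ, 0 ≤ ∑ p, ∑ q, w p * X p q * w q := by
    intro w
    have h := hpsd.dotProduct_mulVec_nonneg w
    rwa [star_trivial, quad_expand] at h
  have hsym : ∀ p q, X q p = X p q := by
    intro p q
    have := hpsd.1.apply p q
    rwa [star_trivial] at this
  -- nonnegativity of eig滤 coefficients
  have hμ0 : μ 0 = 0 := by
    have : μ 0 = (1 + 2*α*Real.cos ((0:ℕ)*φ) + β*(-1:ℝ)^(0:ℕ)) - (4*N:ℝ)/θ := by
      simp [hμdef]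
    rw [this]
    simp only [Nat.cast_zero, zero_mul, Real.cos_zero, pow_zero, mul_one, hθdef, hαdef, hβdef]
    field_simp
    ring
  have hμnn : ∀ k ∈ Finset.range (4*N), 0 ≤ μ k := by
    intro k hk
    rw [Finset.mem_range] at hk
    rcases Nat.eq_zero_or_pos k with rfl | hk1
    · rw [hμ0]
    have hif : (if k = 0 then (4*N:ℝ)/θ else 0) = 0 := by rw [if_neg (by omega)]
    simp only [hμdef, hif, sub_zero]
    rcases Nat.even_or_odd k with he | ho
    · rw [he.neg_one_pow]
      have h2α : 1 + β = 2*α := by rw [hβdef, hαdef]; field_simp; try ring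
      have hcos : -1 ≤ Real.cos (k*φ) := Real.neg_one_le_cos _
      nlinarith
    · rw [ho.neg_one_pow]
      have h2α : 1 - β = 2*α*c := by rw [hβdef, hαdef]; field_simp; try ring
      have hk2N : k ≠ 2*N := by
        obtain ⟨t, ht⟩ := ho; omega
      have hcos : -c ≤ Real.cos (k*φ) := by
        have hb := cos_bound N k hN0 hk1 hk hk2N
        rw [Real.cos_pi_sub] at hb
        exact hb
      nlinarith
  -- Step A : the v-quadratic form
  have hv : ∑ p, ∑ q, v p * X p q * v q = θ^2 - 2*θ*D + T := by
    rw [sum_split]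
    simp only [hvdef, Sum.elim_inl, Sum.elim_inr]
    rw [h00]
    have s1 : ∑ j : Fin (4*N), θ * X (Sum.inl 0) (Sum.inr j) * (-1) = -(θ * D) := by
      have : ∀ j : Fin (4*N), θ * X (Sum.inl 0) (Sum.inr j) * (-1)
          = -(θ * X (Sum.inr j) (Sum.inr j)) := by
        intro j; rw [← hdiag j]; ring
      rw [Finset.sum_congr rfl (fun j _ => this j), Finset.sum_neg_distrib, ← Finset.mul_sum,
        hDdef]
    have s2 : ∑ i : Fin (4*N), (-1) * X (Sum.inr i) (Sum.inl 0) * θ = -(θ * D) := by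
      have : ∀ i : Fin (4*N), (-1) * X (Sum.inr i) (Sum.inl 0) * θ
          = -(θ * X (Sum.inr i) (Sum.inr i)) := by
        intro i; rw [hsym (Sum.inl 0) (Sum.inr i), ← hdiag i]; ring
      rw [Finset.sum_congr rfl (fun i _ => this i), Finset.sum_neg_distrib, ← Finset.mul_sum,
        hDdef]
    have s3 : ∑ i : Fin (4*N), ∑ j : Fin (4*N), (-1) * X (Sum.inr i) (Sum.inr j) * (-1) = T := by
      rw [hTdef]
      exact Finset.sum_congr rfl fun i _ => Finset.sum_congr rfl fun j _ => by ring
    rw [s1, s2, s3]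
    ring
  -- Step B : block quadratic forms combine into cosine of differences
  have hcs : ∀ k : ℕ, (∑ p, ∑ q, cv k p * X p q * cv k q) + (∑ p, ∑ q, sv k p * X p q * sv k q)
      = ∑ i, ∑ j, X (Sum.inr i) (Sum.inr j)
          * Real.cos ((k:ℝ) * ((i:ℕ):ℝ) * φ - (k:ℝ) * ((j:ℕ):ℝ) * φ) := by
    intro k
    simp only [hcvdef, hsvdef]
    rw [sum_block, sum_block, ← Finset.sum_add_distrib]
    refine Finset.sum_congr rfl fun i _ => ?_
    rw [← Finset.sum_add_distrib]
    refine Finset.sum_congr rfl fun j _ => ?_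
    rw [Real.cos_sub]
    ring
  -- Step C : evaluation of the eigen-sums
  have hinner : ∀ i j : Fin (4*N),
      ∑ k ∈ Finset.range (4*N),
          (μ k / (4*N:ℝ)) * Real.cos ((k:ℝ) * ((i:ℕ):ℝ) * φ - (k:ℝ) * ((j:ℕ):ℝ) * φ)
        = (if i = j then (1:ℝ) else 0)
          + α*(if ((i:ℕ)+1) % (4*N) = (j:ℕ) then (1:ℝ) else 0)
          + α*(if ((j:ℕ)+1) % (4*N) = (i:ℕ) then (1:ℝ) else 0)
          + β*(if ((i:ℕ)+2*N) % (4*N) = (j:ℕ) then (1:ℝ) else 0) - 1/θ := by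
    intro i j
    have hcosarg : ∀ k : ℕ, (k:ℝ) * ((i:ℕ):ℝ) * φ - (k:ℝ) * ((j:ℕ):ℝ) * φ
        = (k:ℝ) * ((((i:ℕ):ℤ) - ((j:ℕ):ℤ) : ℤ):ℝ) * φ := by
      intro k; push_cast; ring
    simp only [hcosarg]
    set m : ℤ := ((i:ℕ):ℤ) - ((j:ℕ):ℤ) with hm
    have main := conv_sum N hN0 α β m
    rw [← hφdef] at main
    have split : ∀ k ∈ Finset.range (4*N), μ k / (4*N:ℝ) * Real.cos ((k:ℝ) * (m:ℝ) * φ)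
        = (1/(4*N:ℝ)) * ((1 + 2*α*Real.cos (k*φ) + β*(-1:ℝ)^k) * Real.cos ((k:ℝ) * (m:ℝ) * φ))
          - (1/(4*N:ℝ)) * ((if k = 0 then (4*N:ℝ)/θ else 0) * Real.cos ((k:ℝ) * (m:ℝ) * φ)) := by
      intro k _; simp only [hμdef]; ring
    rw [Finset.sum_congr rfl split, Finset.sum_sub_distrib, ← Finset.mul_sum, ← Finset.mul_sum,
      main]
    have h2 : ∑ k ∈ Finset.range (4*N),
        (if k = 0 then (4*N:ℝ)/θ else 0) * Real.cos ((k:ℝ) * (m:ℝ) * φ) = (4*N:ℝ)/θ := by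
      rw [Finset.sum_eq_single_of_mem 0 (Finset.mem_range.mpr (by omega))]
      · simp
      · intro b _ hb; rw [if_neg hb, zero_mul]
    rw [h2]
    have hN1 : 1 ≤ N := by omega
    simp only [hm, dvd_iff_eq N (i:ℕ) (j:ℕ) hN1 i.isLt j.isLt,
      dvd_iff_succ N (i:ℕ) (j:ℕ) hN1 i.isLt j.isLt,
      dvd_iff_pred N (i:ℕ) (j:ℕ) hN1 i.isLt j.isLt,
      dvd_iff_anti N (i:ℕ) (j:ℕ) hN1 i.isLt j.isLt,
      dvd_iff_anti' N (i:ℕ) (j:ℕ) hN1 i.isLt j.isLt,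
      Fin.val_inj]
    have h4N : ((4*N:ℕ):ℝ) ≠ 0 := by positivity
    have hθne : θ ≠ 0 := ne_of_gt hθ0
    have hite : ∀ (P : Prop) [Decidable P], (if P then ((4*N:ℕ):ℝ) else 0)
        = ((4*N:ℕ):ℝ) * (if P then (1:ℝ) else 0) := by
      intro P _; split_ifs <;> simp
    simp only [hite]
    generalize (if i = j then (1:ℝ) else 0) = t1
    generalize (if ((i:ℕ)+1) % (4*N) = (j:ℕ) then (1:ℝ) else 0) = t2
    generalize (if ((j:ℕ)+1) % (4*N) = (i:ℕ) then (1:ℝ) else 0) = t3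
    generalize (if ((i:ℕ)+2*N) % (4*N) = (j:ℕ) then (1:ℝ) else 0) = t4
    push_cast
    field_simp
    ring
  -- Step D : assemble
  have master : (1/θ) * (∑ p, ∑ q, v p * X p q * v q)
      + ∑ k ∈ Finset.range (4*N), (μ k/(4*N:ℝ))
          * ((∑ p, ∑ q, cv k p * X p q * cv k q) + (∑ p, ∑ q, sv k p * X p q * sv k q))
      = θ - D := by
    rw [hv]
    have e1 : ∀ k ∈ Finset.range (4*N), (μ k/(4*N:ℝ))
        * ((∑ p, ∑ q, cv k p * X p q * cv k q) + (∑ p, ∑ q, sv k p * X p q * sv k q))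
        = ∑ i, ∑ j, X (Sum.inr i) (Sum.inr j)
            * ((μ k/(4*N:ℝ)) * Real.cos ((k:ℝ) * ((i:ℕ):ℝ) * φ - (k:ℝ) * ((j:ℕ):ℝ) * φ)) := by
      intro k _
      rw [hcs k, Finset.mul_sum]
      refine Finset.sum_congr rfl fun i _ => ?_
      rw [Finset.mul_sum]
      exact Finset.sum_congr rfl fun j _ => by ring
    rw [Finset.sum_congr rfl e1]
    have e2 : ∑ k ∈ Finset.range (4*N), ∑ i, ∑ j, X (Sum.inr i) (Sum.inr j)
          * ((μ k/(4*N:ℝ)) * Real.cos ((k:ℝ) * ((i:ℕ):ℝ) * φ - (k:ℝ) * ((j:ℕ):ℝ) * φ))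
        = ∑ i, ∑ j, X (Sum.inr i) (Sum.inr j)
            * (∑ k ∈ Finset.range (4*N),
               (μ k/(4*N:ℝ)) * Real.cos ((k:ℝ) * ((i:ℕ):ℝ) * φ - (k:ℝ) * ((j:ℕ):ℝ) * φ)) := by
      rw [Finset.sum_comm]
      refine Finset.sum_congr rfl fun i _ => ?_
      rw [Finset.sum_comm]
      refine Finset.sum_congr rfl fun j _ => ?_
      rw [Finset.mul_sum]
    rw [e2]
    have term : ∀ i j : Fin (4*N), X (Sum.inr i) (Sum.inr j)
        * ((if i = j then (1:ℝ) else 0)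
          + α*(if ((i:ℕ)+1) % (4*N) = (j:ℕ) then (1:ℝ) else 0)
          + α*(if ((j:ℕ)+1) % (4*N) = (i:ℕ) then (1:ℝ) else 0)
          + β*(if ((i:ℕ)+2*N) % (4*N) = (j:ℕ) then (1:ℝ) else 0) - 1/θ)
        = (if i = j then X (Sum.inr i) (Sum.inr j) else 0) - X (Sum.inr i) (Sum.inr j)/θ := by
      intro i j
      have hb : X (Sum.inr i) (Sum.inr j) * (if ((i:ℕ)+1) % (4*N) = (j:ℕ) then (1:ℝ) else 0) = 0 := by
        split_ifs with h
        · rw [hedge i j (Or.inl h), zero_mul]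
        · rw [mul_zero]
      have hc : X (Sum.inr i) (Sum.inr j) * (if ((j:ℕ)+1) % (4*N) = (i:ℕ) then (1:ℝ) else 0) = 0 := by
        split_ifs with h
        · rw [hedge i j (Or.inr (Or.inl h)), zero_mul]
        · rw [mul_zero]
      have hd : X (Sum.inr i) (Sum.inr j) * (if ((i:ℕ)+2*N) % (4*N) = (j:ℕ) then (1:ℝ) else 0) = 0 := by
        split_ifs with h
        · rw [hedge i j (Or.inr (Or.inr h)), zero_mul]
        · rw [mul_zero]
      have ha : X (Sum.inr i) (Sum.inr j) * (if i = j then (1:ℝ) else 0)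
          = (if i = j then X (Sum.inr i) (Sum.inr j) else 0) := by
        split_ifs <;> simp
      calc X (Sum.inr i) (Sum.inr j) * (_)
          = X (Sum.inr i) (Sum.inr j) * (if i = j then (1:ℝ) else 0)
            + α*(X (Sum.inr i) (Sum.inr j) * (if ((i:ℕ)+1) % (4*N) = (j:ℕ) then (1:ℝ) else 0))
            + α*(X (Sum.inr i) (Sum.inr j) * (if ((j:ℕ)+1) % (4*N) = (i:ℕ) then (1:ℝ) else 0))
            + β*(X (Sum.inr i) (Sum.inr j) * (if ((i:ℕ)+2*N) % (4*N) = (j:ℕ) then (1:ℝ) else 0))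
            - X (Sum.inr i) (Sum.inr j)/θ := by ring
        _ = (if i = j then X (Sum.inr i) (Sum.inr j) else 0) - X (Sum.inr i) (Sum.inr j)/θ := by
            rw [ha, hb, hc, hd]; ring
    have e3 : ∑ i, ∑ j, X (Sum.inr i) (Sum.inr j)
        * (∑ k ∈ Finset.range (4*N),
           (μ k/(4*N:ℝ)) * Real.cos ((k:ℝ) * ((i:ℕ):ℝ) * φ - (k:ℝ) * ((j:ℕ):ℝ) * φ))
        = D - T/θ := by
      have step : ∀ i : Fin (4*N), ∀ j : Fin (4*N), X (Sum.inr i) (Sum.inr j)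
          * (∑ k ∈ Finset.range (4*N),
             (μ k/(4*N:ℝ)) * Real.cos ((k:ℝ) * ((i:ℕ):ℝ) * φ - (k:ℝ) * ((j:ℕ):ℝ) * φ))
          = (if i = j then X (Sum.inr i) (Sum.inr j) else 0) - X (Sum.inr i) (Sum.inr j)/θ := by
        intro i j
        rw [hinner i j]
        exact term i j
      rw [Finset.sum_congr rfl (fun i _ => Finset.sum_congr rfl (fun j _ => step i j))]
      simp only [Finset.sum_sub_distrib]
      have p1 : ∑ i : Fin (4*N), ∑ j : Fin (4*N),
          (if i = j then X (Sum.inr i) (Sum.inr j) else 0) = D := by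
        rw [hDdef]
        refine Finset.sum_congr rfl fun i _ => ?_
        rw [Finset.sum_ite_eq]
        simp
      have p2 : ∑ i : Fin (4*N), ∑ j : Fin (4*N), X (Sum.inr i) (Sum.inr j)/θ = T/θ := by
        rw [hTdef]
        simp only [← Finset.sum_div]
      rw [p1, p2]
    rw [e3]
    field_simp
    ring
  -- conclusion
  have hnn : 0 ≤ (1/θ) * (∑ p, ∑ q, v p * X p q * v q)
      + ∑ k ∈ Finset.range (4*N), (μ k/(4*N:ℝ))
          * ((∑ p, ∑ q, cv k p * X p q * cv k q) + (∑ p, ∑ q, sv k p * X p q * sv k q)) := by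
    apply add_nonneg
    · exact mul_nonneg (by positivity) (hQ v)
    · apply Finset.sum_nonneg
      intro k hk
      apply mul_nonneg
      · apply div_nonneg (hμnn k hk) (by positivity)
      · exact add_nonneg (hQ (cv k)) (hQ (sv k))
  have : D ≤ θ := by linarith [master, hnn]
  calc ∑ i, X (Sum.inr i) (Sum.inr i) = D := by rw [hDdef]
    _ ≤ θ := this
    _ = (N : ℝ) * (1 + Real.cos (Real.pi / (2 * N))) := by rw [hθdef, hcdef, hφdef]

end LTML
end LTML

/-- The Lovász theta number of the Möbius ladder graph `Ci_{4N}(1, 2N)` equals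
`N (1 + cos(π/(2N)))`: this value is the greatest value of the Lovász theta SDP. -/
theorem lovasz_theta_mobius_ladder (N : ℕ) (hN : 2 ≤ N) :
    -- adjacency in the circulant graph Ci_{4N}(1, 2N)
    let Adj : Fin (4 * N) → Fin (4 * N) → Prop := fun i j =>
      (i.val + 1) % (4 * N) = j.val ∨ (j.val + 1) % (4 * N) = i.val ∨
        (i.val + 2 * N) % (4 * N) = j.val
    IsGreatest
      {s : ℝ | ∃ X : Matrix (Fin 1 ⊕ Fin (4 * N)) (Fin 1 ⊕ Fin (4 * N)) ℝ,
        X.PosSemidef ∧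
        X (Sum.inl 0) (Sum.inl 0) = 1 ∧
        (∀ i, X (Sum.inr i) (Sum.inr i) = X (Sum.inl 0) (Sum.inr i)) ∧
        (∀ i j, Adj i j → X (Sum.inr i) (Sum.inr j) = 0) ∧
        s = ∑ i, X (Sum.inr i) (Sum.inr i)}
      ((N : ℝ) * (1 + Real.cos (Real.pi / (2 * N)))) := by
  intro Adj
  constructor
  · -- membership : the explicit optimal matrix
    refine ⟨LTML.Xopt N, LTML.Xopt_psd N, LTML.Xopt_corner N, fun i => ?_, fun i j hij => ?_, ?_⟩
    · rw [LTML.Xopt_diag, LTML.Xopt_row]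
    · have hij' : ((i:ℕ)+1) % (4*N) = (j:ℕ) ∨ ((j:ℕ)+1) % (4*N) = (i:ℕ) ∨
          ((i:ℕ)+2*N) % (4*N) = (j:ℕ) := hij
      rcases hij' with h | h | h
      · exact LTML.Xopt_edge1 N (by omega) i j h
      · rw [LTML.Xopt_symm]; exact LTML.Xopt_edge1 N (by omega) j i h
      · exact LTML.Xopt_edge3 N (by omega) i j h
    · rw [Finset.sum_congr rfl (fun i _ => LTML.Xopt_diag N i), Finset.sum_const,
        Finset.card_univ, Fintype.card_fin, nsmul_eq_mul]
      simp only [LTML.cc, LTML.phi]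
      push_cast
      ring
  · rintro s ⟨X, hpsd, h00, hdiag, hedge, hs⟩
    rw [hs]
    exact LTML.upper N hN X hpsd h00 hdiag hedge
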